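/- Let Y be a 2-dimensional 3-partite weighted simplicial complex with vertex parts Y[1], Y[2], Y[3]. Suppose that for every v ∈ Y[1], the link of v (a bipartite graph between Y[2] and Y[3]) is an η-bipartite expander. Let A^{1,2}, A^{1,3}, A^{2,3} denote the bipartite adjacency operators between the respective parts. Then λ(A^{2,3}) ≤ η + λ(A^{1,2})·λ(A^{1,3}). -/

import Mathlib

open Finset

section Bipartite

variable {L R : Type*} [Fintype L] [Fintype R]

/-- Mass of a left vertex. -/
def lmass (w : L → R → ℝ) (v : L) : ℝ := ∑ u, w v u

/-- Mass of a right vertex. -/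
def rmass (w : L → R → ℝ) (u : R) : ℝ := ∑ v, w v u

/-- `λ`-bipartite expander: the bipartite averaging operator has norm at most `λ`
on the orthogonal complement of the constant functions (scale-invariant formulation). -/
def BipartiteExpander (w : L → R → ℝ) (lam : ℝ) : Prop :=
  ∀ (f : L → ℝ) (g : R → ℝ), ∑ v, lmass w v * f v = 0 → ∑ u, rmass w u * g u = 0 →
    |∑ v, ∑ u, w v u * f v * g u| ≤
      lam * Real.sqrt (∑ v, lmass w v * f v ^ 2) * Real.sqrt (∑ u, rmass w u * g u ^ 2)

end Bipartite

private lemma aux_centered_zero {ι : Type*} [Fintype ι] (q : ι → ℝ) (f : ι → ℝ) (m F : ℝ)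
    (hm : ∑ i, q i = m) (hS : ∑ i, q i * f i = m * F) :
    ∑ i, q i * (f i - F) = 0 := by
  have h : ∑ i, q i * (f i - F) = (∑ i, q i * f i) - (∑ i, q i) * F := by
    rw [Finset.sum_mul, ← Finset.sum_sub_distrib]
    exact Finset.sum_congr rfl fun i _ => by ring
  rw [h, hm, hS]; ring

private lemma aux_centered_sq_le {ι : Type*} [Fintype ι] (q : ι → ℝ) (hq : ∀ i, 0 ≤ q i)
    (f : ι → ℝ) (m F : ℝ)
    (hm : ∑ i, q i = m) (hS : ∑ i, q i * f i = m * F) :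
    ∑ i, q i * (f i - F) ^ 2 ≤ ∑ i, q i * f i ^ 2 := by
  have hm0 : 0 ≤ m := hm ▸ Finset.sum_nonneg fun i _ => hq i
  have key : ∑ i, q i * (f i - F) ^ 2
      = (∑ i, q i * f i ^ 2) - 2 * F * (∑ i, q i * f i) + F ^ 2 * (∑ i, q i) := by
    calc ∑ i, q i * (f i - F) ^ 2
        = ∑ i, (q i * f i ^ 2 - 2 * F * (q i * f i) + F ^ 2 * q i) :=
          Finset.sum_congr rfl fun i _ => by ring
      _ = _ := by
          rw [Finset.sum_add_distrib, Finset.sum_sub_distrib, ← Finset.mul_sum, ← Finset.mul_sum]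
  rw [key, hS, hm]
  nlinarith [mul_nonneg hm0 (sq_nonneg F)]

theorem three_partite_trickling
    {Y1 Y2 Y3 : Type*} [Fintype Y1] [Fintype Y2] [Fintype Y3]
    (p : Y1 → Y2 → Y3 → ℝ) (hnn : ∀ a b c, 0 ≤ p a b c)
    (htot : ∑ a, ∑ b, ∑ c, p a b c = 1)
    (eta l12 l13 : ℝ) (heta : 0 ≤ eta) (h12 : 0 ≤ l12) (h13 : 0 ≤ l13)
    (hlink : ∀ a : Y1, BipartiteExpander (fun b c => p a b c) eta)
    (h1 : BipartiteExpander (fun (a : Y1) (b : Y2) => ∑ c, p a b c) l12)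
    (h2 : BipartiteExpander (fun (a : Y1) (c : Y3) => ∑ b, p a b c) l13) :
    BipartiteExpander (fun (b : Y2) (c : Y3) => ∑ a, p a b c) (eta + l12 * l13) := by
  intro f g hf hg
  simp only [lmass, rmass] at hf hg ⊢
  classical
  set m1 : Y1 → ℝ := fun a => ∑ b, ∑ c, p a b c with hm1def
  set Sf : Y1 → ℝ := fun a => ∑ b, (∑ c, p a b c) * f b with hSfdef
  set Sg : Y1 → ℝ := fun a => ∑ c, (∑ b, p a b c) * g c with hSgdef
  set F : Y1 → ℝ := fun a => Sf a / m1 a with hFdef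
  set G : Y1 → ℝ := fun a => Sg a / m1 a with hGdef
  have hm1nn : ∀ a, 0 ≤ m1 a := fun a =>
    Finset.sum_nonneg fun b _ => Finset.sum_nonneg fun c _ => hnn a b c
  have hpz : ∀ a, m1 a = 0 → ∀ b c, p a b c = 0 := by
    intro a ha b c
    have h1' : ∀ b ∈ Finset.univ (α := Y2), (∑ c, p a b c) = 0 :=
      (Finset.sum_eq_zero_iff_of_nonneg
        (fun b _ => Finset.sum_nonneg fun c _ => hnn a b c)).mp ha
    exact (Finset.sum_eq_zero_iff_of_nonneg (fun c _ => hnn a b c)).mp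
      (h1' b (Finset.mem_univ b)) c (Finset.mem_univ c)
  have hmF : ∀ a, m1 a * F a = Sf a := by
    intro a
    by_cases h : m1 a = 0
    · have : Sf a = 0 := by
        simp only [hSfdef]
        exact Finset.sum_eq_zero fun b _ => by
          simp [Finset.sum_eq_zero fun c _ => hpz a h b c]
      rw [h, this, zero_mul]
    · show m1 a * (Sf a / m1 a) = Sf a
      field_simp
  have hmG : ∀ a, m1 a * G a = Sg a := by
    intro a
    by_cases h : m1 a = 0
    · have : Sg a = 0 := by
        simp only [hSgdef]
        exact Finset.sum_eq_zero fun c _ => by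
          simp [Finset.sum_eq_zero fun b _ => hpz a h b c]
      rw [h, this, zero_mul]
    · show m1 a * (Sg a / m1 a) = Sg a
      field_simp
  -- local quantities
  set Pf : Y1 → ℝ := fun a => ∑ b, (∑ c, p a b c) * f b ^ 2 with hPfdef
  set Pg : Y1 → ℝ := fun a => ∑ c, (∑ b, p a b c) * g c ^ 2 with hPgdef
  set A : ℝ := ∑ b, (∑ c, ∑ a, p a b c) * f b ^ 2 with hAdef
  set B : ℝ := ∑ c, (∑ b, ∑ a, p a b c) * g c ^ 2 with hBdef
  have hAnn : 0 ≤ A := Finset.sum_nonneg fun b _ => mul_nonneg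
    (Finset.sum_nonneg fun c _ => Finset.sum_nonneg fun a _ => hnn a b c) (sq_nonneg _)
  have hBnn : 0 ≤ B := Finset.sum_nonneg fun c _ => mul_nonneg
    (Finset.sum_nonneg fun b _ => Finset.sum_nonneg fun a _ => hnn a b c) (sq_nonneg _)
  have hPfnn : ∀ a, 0 ≤ Pf a := fun a => Finset.sum_nonneg fun b _ =>
    mul_nonneg (Finset.sum_nonneg fun c _ => hnn a b c) (sq_nonneg _)
  have hPgnn : ∀ a, 0 ≤ Pg a := fun a => Finset.sum_nonneg fun c _ =>
    mul_nonneg (Finset.sum_nonneg fun b _ => hnn a b c) (sq_nonneg _)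
  have hsumPf : ∑ a, Pf a = A := by
    simp only [hPfdef, hAdef]
    rw [Finset.sum_comm]
    refine Finset.sum_congr rfl fun b _ => ?_
    rw [← Finset.sum_mul, Finset.sum_comm]
  have hsumPg : ∑ a, Pg a = B := by
    simp only [hPgdef, hBdef]
    rw [Finset.sum_comm]
    refine Finset.sum_congr rfl fun c _ => ?_
    rw [← Finset.sum_mul, Finset.sum_comm]
  -- link step
  set L : Y1 → ℝ := fun a => ∑ b, ∑ c, p a b c * (f b - F a) * (g c - G a) with hLdef
  have hlinkbound : ∀ a, |L a| ≤ eta * Real.sqrt (Pf a) * Real.sqrt (Pg a) := by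
    intro a
    have cond1 : ∑ b, lmass (fun b c => p a b c) b * (f b - F a) = 0 := by
      simp only [lmass]
      exact aux_centered_zero _ _ (m1 a) (F a) rfl (hmF a).symm
    have hmc : (∑ c, ∑ b, p a b c) = m1 a := Finset.sum_comm
    have cond2 : ∑ c, rmass (fun b c => p a b c) c * (g c - G a) = 0 := by
      simp only [rmass]
      exact aux_centered_zero _ _ (m1 a) (G a) hmc (hmG a).symm
    have h := hlink a (fun b => f b - F a) (fun c => g c - G a) cond1 cond2
    simp only [lmass, rmass] at h
    refine h.trans ?_
    have hQf : ∑ b, (∑ c, p a b c) * (f b - F a) ^ 2 ≤ Pf a :=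
      aux_centered_sq_le _ (fun b => Finset.sum_nonneg fun c _ => hnn a b c) _ (m1 a) (F a)
        rfl (hmF a).symm
    have hQg : ∑ c, (∑ b, p a b c) * (g c - G a) ^ 2 ≤ Pg a :=
      aux_centered_sq_le _ (fun c => Finset.sum_nonneg fun b _ => hnn a b c) _ (m1 a)
        (G a) hmc (hmG a).symm
    gcongr
  -- Cauchy–Schwarz over a
  have hcs : ∑ a, Real.sqrt (Pf a) * Real.sqrt (Pg a) ≤ Real.sqrt A * Real.sqrt B := by
    have h := Finset.sum_mul_sq_le_sq_mul_sq Finset.univ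
      (fun a => Real.sqrt (Pf a)) (fun a => Real.sqrt (Pg a))
    simp only [Real.sq_sqrt (hPfnn _), Real.sq_sqrt (hPgnn _)] at h
    rw [hsumPf, hsumPg] at h
    have hnn' : 0 ≤ ∑ a, Real.sqrt (Pf a) * Real.sqrt (Pg a) :=
      Finset.sum_nonneg fun a _ => mul_nonneg (Real.sqrt_nonneg _) (Real.sqrt_nonneg _)
    have := Real.sqrt_le_sqrt h
    rwa [Real.sqrt_sq hnn', Real.sqrt_mul hAnn] at this
  have hLsum : |∑ a, L a| ≤ eta * Real.sqrt A * Real.sqrt B := by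
    calc |∑ a, L a| ≤ ∑ a, |L a| := Finset.abs_sum_le_sum_abs _ _
      _ ≤ ∑ a, eta * Real.sqrt (Pf a) * Real.sqrt (Pg a) :=
          Finset.sum_le_sum fun a _ => hlinkbound a
      _ = eta * ∑ a, Real.sqrt (Pf a) * Real.sqrt (Pg a) := by
          rw [Finset.mul_sum]; exact Finset.sum_congr rfl fun a _ => by ring
      _ ≤ eta * (Real.sqrt A * Real.sqrt B) := by
          exact mul_le_mul_of_nonneg_left hcs heta
      _ = eta * Real.sqrt A * Real.sqrt B := by ring
  -- global conditions
  have hsumSg : ∑ a, m1 a * G a = 0 := by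
    have : ∑ a, m1 a * G a = ∑ a, Sg a := Finset.sum_congr rfl fun a _ => hmG a
    rw [this]
    calc ∑ a, Sg a = ∑ c, (∑ a, ∑ b, p a b c) * g c := by
          simp only [hSgdef]
          rw [Finset.sum_comm]
          exact Finset.sum_congr rfl fun c _ => (Finset.sum_mul _ _ _).symm
      _ = ∑ c, (∑ b, ∑ a, p a b c) * g c :=
          Finset.sum_congr rfl fun c _ => by rw [Finset.sum_comm]
      _ = 0 := hg
  have hsumSf : ∑ a, m1 a * F a = 0 := by
    have : ∑ a, m1 a * F a = ∑ a, Sf a := Finset.sum_congr rfl fun a _ => hmF a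
    rw [this]
    calc ∑ a, Sf a = ∑ b, (∑ a, ∑ c, p a b c) * f b := by
          simp only [hSfdef]
          rw [Finset.sum_comm]
          exact Finset.sum_congr rfl fun b _ => (Finset.sum_mul _ _ _).symm
      _ = ∑ b, (∑ c, ∑ a, p a b c) * f b :=
          Finset.sum_congr rfl fun b _ => by rw [Finset.sum_comm]
      _ = 0 := hf
  -- bound E := ∑ m1 G²
  set E : ℝ := ∑ a, m1 a * G a ^ 2 with hEdef
  have hEnn : 0 ≤ E := Finset.sum_nonneg fun a _ => mul_nonneg (hm1nn a) (sq_nonneg _)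
  have hE : Real.sqrt E ≤ l13 * Real.sqrt B := by
    have cond1 : ∑ a, lmass (fun a c => ∑ b, p a b c) a * G a = 0 := by
      have : ∀ a, lmass (fun a c => ∑ b, p a b c) a = m1 a := by
        intro a; simp only [lmass, hm1def]; rw [Finset.sum_comm]
      simp only [this]; exact hsumSg
    have cond2 : ∑ c, rmass (fun a c => ∑ b, p a b c) c * g c = 0 := by
      have : ∀ c, rmass (fun a c => ∑ b, p a b c) c = ∑ b, ∑ a, p a b c := by
        intro c; simp only [rmass]; rw [Finset.sum_comm]
      simp only [this]; exact hg
    have h := h2 G g cond1 cond2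
    have hlhs : ∑ a, ∑ c, (∑ b, p a b c) * G a * g c = E := by
      simp only [hEdef]
      refine Finset.sum_congr rfl fun a _ => ?_
      have : ∑ c, (∑ b, p a b c) * G a * g c = G a * Sg a := by
        rw [hSgdef, Finset.mul_sum]
        exact Finset.sum_congr rfl fun c _ => by ring
      rw [this, ← hmG a]; ring
    have hm' : ∀ a, lmass (fun a c => ∑ b, p a b c) a = m1 a := by
      intro a; simp only [lmass, hm1def]; rw [Finset.sum_comm]
    have hr' : ∀ c, rmass (fun a c => ∑ b, p a b c) c = ∑ b, ∑ a, p a b c := by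
      intro c; simp only [rmass]; rw [Finset.sum_comm]
    simp only [hm', hr', hlhs] at h
    have hEle : E ≤ l13 * Real.sqrt E * Real.sqrt B := le_trans (le_abs_self E) h
    rcases eq_or_lt_of_le (Real.sqrt_nonneg E) with h0 | h0
    · rw [← h0]; exact mul_nonneg h13 (Real.sqrt_nonneg _)
    · have : Real.sqrt E * Real.sqrt E ≤ (l13 * Real.sqrt B) * Real.sqrt E := by
        rw [Real.mul_self_sqrt hEnn]; linarith [hEle]
      exact le_of_mul_le_mul_right this h0
  -- bound T := ∑ G * Sf
  have hT : |∑ a, G a * Sf a| ≤ l12 * l13 * Real.sqrt A * Real.sqrt B := by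
    have cond1 : ∑ a, lmass (fun a b => ∑ c, p a b c) a * G a = 0 := hsumSg
    have cond2 : ∑ b, rmass (fun a b => ∑ c, p a b c) b * f b = 0 := by
      have : ∀ b, rmass (fun a b => ∑ c, p a b c) b = ∑ c, ∑ a, p a b c := by
        intro b; simp only [rmass]; rw [Finset.sum_comm]
      simp only [this]; exact hf
    have h := h1 G f cond1 cond2
    have hlhs : ∑ a, ∑ b, (∑ c, p a b c) * G a * f b = ∑ a, G a * Sf a := by
      refine Finset.sum_congr rfl fun a _ => ?_
      rw [hSfdef, Finset.mul_sum]
      exact Finset.sum_congr rfl fun b _ => by ring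
    have hr' : ∀ b, rmass (fun a b => ∑ c, p a b c) b = ∑ c, ∑ a, p a b c := by
      intro b; simp only [rmass]; rw [Finset.sum_comm]
    simp only [lmass, hr', hlhs] at h
    have h' : |∑ a, G a * Sf a| ≤ l12 * Real.sqrt E * Real.sqrt A := h
    refine h'.trans ?_
    calc l12 * Real.sqrt E * Real.sqrt A ≤ l12 * (l13 * Real.sqrt B) * Real.sqrt A := by
          gcongr
      _ = l12 * l13 * Real.sqrt A * Real.sqrt B := by ring
  -- decomposition of the main sum
  have hsplit : ∑ b, ∑ c, (∑ a, p a b c) * f b * g c = (∑ a, L a) + ∑ a, G a * Sf a := by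
    have step1 : ∑ b, ∑ c, (∑ a, p a b c) * f b * g c
        = ∑ a, ∑ b, ∑ c, p a b c * f b * g c := by
      calc ∑ b, ∑ c, (∑ a, p a b c) * f b * g c
          = ∑ b, ∑ c, ∑ a, p a b c * f b * g c := by
            refine Finset.sum_congr rfl fun b _ => Finset.sum_congr rfl fun c _ => ?_
            rw [Finset.sum_mul, Finset.sum_mul]
        _ = ∑ b, ∑ a, ∑ c, p a b c * f b * g c :=
            Finset.sum_congr rfl fun b _ => Finset.sum_comm
        _ = ∑ a, ∑ b, ∑ c, p a b c * f b * g c := Finset.sum_comm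
    rw [step1, ← Finset.sum_add_distrib]
    refine Finset.sum_congr rfl fun a _ => ?_
    have e1 : ∑ b, ∑ c, p a b c * f b = Sf a :=
      Finset.sum_congr rfl fun b _ => (Finset.sum_mul _ _ _).symm
    have e2 : ∑ b, ∑ c, p a b c * g c = Sg a := by
      rw [Finset.sum_comm]
      exact Finset.sum_congr rfl fun c _ => (Finset.sum_mul _ _ _).symm
    calc ∑ b, ∑ c, p a b c * f b * g c
        = ∑ b, ∑ c, (p a b c * (f b - F a) * (g c - G a) + G a * (p a b c * f b)
            + F a * (p a b c * g c) - F a * G a * p a b c) := by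
          refine Finset.sum_congr rfl fun b _ => Finset.sum_congr rfl fun c _ => ?_
          ring
      _ = (∑ b, ∑ c, p a b c * (f b - F a) * (g c - G a))
            + G a * (∑ b, ∑ c, p a b c * f b) + F a * (∑ b, ∑ c, p a b c * g c)
            - F a * G a * (∑ b, ∑ c, p a b c) := by
          simp only [Finset.sum_add_distrib, Finset.sum_sub_distrib, ← Finset.mul_sum]
      _ = L a + G a * Sf a := by
          have e3 : (∑ b, ∑ c, p a b c) = m1 a := rfl
          have e4 : (∑ b, ∑ c, p a b c * (f b - F a) * (g c - G a)) = L a := rfl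
          rw [e1, e2, e3, e4]
          have h5 : Sg a = m1 a * G a := (hmG a).symm
          rw [h5]; ring
  -- conclusion
  rw [hsplit]
  calc |(∑ a, L a) + ∑ a, G a * Sf a| ≤ |∑ a, L a| + |∑ a, G a * Sf a| := abs_add_le _ _
    _ ≤ eta * Real.sqrt A * Real.sqrt B + l12 * l13 * Real.sqrt A * Real.sqrt B :=
        add_le_add hLsum hT
    _ = (eta + l12 * l13) * Real.sqrt A * Real.sqrt B := by ring
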